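/- Let j : ℝᴺ → [0,∞] be measurable, even, with 0 < ∫ min{1,|z|²} j(z) dz < ∞ and ∫_{ℝᴺ} j(z) dz = ∞. Then κ(r) → ∞ as r → 0⁺, where κ(r) = ∫_{{j < d_j(r)}} j(z) dz + d_j(r)(|{j ≥ d_j(r)}| − r) and d_j is the decreasing rearrangement of j. -/

import Mathlib

open MeasureTheory ENNReal Filter Topology

noncomputable section

/-- N-dimensional Euclidean space. -/
abbrev Euc (N : ℕ) := EuclideanSpace ℝ (Fin N)

/-- The nonlocal quadratic form ℰ_j(u,u) = (1/2)∬ (u(x)-u(y))² j(x-y) dx dy. -/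
def Ej {N : ℕ} (j : Euc N → ℝ≥0∞) (u : Euc N → ℝ) : ℝ≥0∞ :=
  (1/2 : ℝ≥0∞) * ∫⁻ p : Euc N × Euc N,
    ENNReal.ofReal ((u p.1 - u p.2)^2) * j (p.1 - p.2) ∂(volume.prod volume)

/-- The squared L² norm of u. -/
def l2sq {N : ℕ} (u : Euc N → ℝ) : ℝ≥0∞ := ∫⁻ x, ENNReal.ofReal ((u x)^2)

/-- The squared norm of 𝒟ʲ(ℝᴺ): ‖u‖² = ℰ_j(u,u) + ‖u‖²_{L²}. -/
def DnormSq {N : ℕ} (j : Euc N → ℝ≥0∞) (u : Euc N → ℝ) : ℝ≥0∞ := Ej j u + l2sq u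

/-- Membership in 𝒟ʲ(ℝᴺ) = {u ∈ L² : ℰ_j(u,u) < ∞}. -/
def MemDj {N : ℕ} (j : Euc N → ℝ≥0∞) (u : Euc N → ℝ) : Prop :=
  MemLp u 2 (volume : Measure (Euc N)) ∧ Ej j u < ⊤

/-- Condition (A1): 0 < ∫ min{1,|z|²} j(z) dz < ∞ (evenness stated separately). -/
def CondA1 {N : ℕ} (j : Euc N → ℝ≥0∞) : Prop :=
  0 < ∫⁻ z, ENNReal.ofReal (min 1 (‖z‖^2)) * j z ∧
    (∫⁻ z, ENNReal.ofReal (min 1 (‖z‖^2)) * j z) < ⊤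

/-- The decreasing rearrangement d_j(r) = inf{c ≥ 0 : |{j > c}| ≤ r}. -/
def decRearr {N : ℕ} (j : Euc N → ℝ≥0∞) (r : ℝ≥0∞) : ℝ≥0∞ :=
  sInf {c : ℝ≥0∞ | volume {x : Euc N | c < j x} ≤ r}

/-- κ(r) = ∫_{{j < d_j(r)}} j dz + d_j(r)(|{j ≥ d_j(r)}| − r). -/
def kappaFun {N : ℕ} (j : Euc N → ℝ≥0∞) (r : ℝ≥0∞) : ℝ≥0∞ :=
  (∫⁻ z in {z : Euc N | j z < decRearr j r}, j z) +
    decRearr j r * (volume {z : Euc N | decRearr j r ≤ j z} - r)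

/-- If j satisfies (A1) and ∫ j = ∞, then κ(r) → ∞ as r → 0⁺. -/
theorem kappaFun_tendsto_top {N : ℕ} (j : Euc N → ℝ≥0∞) (hj : Measurable j)
    (heven : ∀ z, j (-z) = j z) (hA1 : CondA1 j)
    (hA2 : (∫⁻ z, j z) = ⊤) :
    Tendsto (kappaFun j) (𝓝[>] (0 : ℝ≥0∞)) (𝓝 ⊤) := by
  classical
  -- dispose of the degenerate case N = 0
  rcases Nat.eq_zero_or_pos N with hN | hN
  · exfalso
    subst hN
    haveI : Subsingleton (Euc 0) := ⟨fun a b => PiLp.ext fun i => Fin.elim0 i⟩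
    have hz0 : ∀ z : Euc 0, ENNReal.ofReal (min 1 (‖z‖^2)) * j z = 0 := by
      intro z
      have hz : z = 0 := Subsingleton.elim z 0
      subst hz
      simp
    have : (∫⁻ z : Euc 0, ENNReal.ofReal (min 1 (‖z‖^2)) * j z) = 0 := by
      simp only [hz0, lintegral_zero]
    exact absurd hA1.1 (by rw [this]; exact lt_irrefl 0)
  haveI : Nonempty (Fin N) := ⟨⟨0, hN⟩⟩
  haveI : Nontrivial (Euc N) := by
    refine ⟨0, EuclideanSpace.single ⟨0, hN⟩ 1, fun h => ?_⟩
    have := congrArg (fun v : Euc N => v ⟨0, hN⟩) h.symm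
    simp [EuclideanSpace.single] at this
  haveI : NullSingletonClass (volume : Measure (Euc N)) := by infer_instance
  have hmeasmin : Measurable fun z : Euc N => ENNReal.ofReal (min 1 (‖z‖^2)) * j z :=
    (ENNReal.measurable_ofReal.comp
      (measurable_const.min (measurable_norm.pow_const 2))).mul hj
  have hsetm : ∀ c : ℝ≥0∞, MeasurableSet {z : Euc N | j z < c} :=
    fun c => measurableSet_lt hj measurable_const
  -- j is finite a.e.
  have hfin : ∀ᵐ z : Euc N, j z < ⊤ := by
    have h1 : ∀ᵐ z : Euc N, ENNReal.ofReal (min 1 (‖z‖^2)) * j z < ⊤ :=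
      ae_lt_top hmeasmin hA1.2.ne
    have h0 : ∀ᵐ z : Euc N, z ≠ 0 := by
      rw [ae_iff]
      have : {z : Euc N | ¬ z ≠ 0} = {(0 : Euc N)} := by ext z; simp
      rw [this]
      exact measure_singleton _
    filter_upwards [h1, h0] with z hz hz0
    by_contra h
    rw [not_lt, top_le_iff] at h
    rw [h, ENNReal.mul_top] at hz
    · exact absurd hz (lt_irrefl _)
    · simp only [ne_eq, ENNReal.ofReal_eq_zero, not_le]
      have hz' : 0 < ‖z‖ := norm_pos_iff.mpr hz0
      exact lt_min one_pos (by positivity)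
  -- each superlevel set has positive measure
  have hpos : ∀ m : ℕ, volume {x : Euc N | (m : ℝ≥0∞) < j x} ≠ 0 := by
    intro m hm0
    have hae : ∀ᵐ z : Euc N, j z ≤ (m : ℝ≥0∞) := by
      rw [ae_iff]; simpa [not_le] using hm0
    have hb : ∫⁻ z in Metric.ball (0 : Euc N) 1, j z
        ≤ (m : ℝ≥0∞) * volume (Metric.ball (0 : Euc N) 1) := by
      calc ∫⁻ z in Metric.ball (0 : Euc N) 1, j z
          ≤ ∫⁻ _z in Metric.ball (0 : Euc N) 1, (m : ℝ≥0∞) :=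
            lintegral_mono_ae (ae_restrict_of_ae hae)
        _ = (m : ℝ≥0∞) * volume (Metric.ball (0 : Euc N) 1) := setLIntegral_const _ _
    have hcmp : ∫⁻ z in (Metric.ball (0 : Euc N) 1)ᶜ, j z
        ≤ ∫⁻ z, ENNReal.ofReal (min 1 (‖z‖^2)) * j z := by
      refine le_trans (le_of_eq ?_) (setLIntegral_le_lintegral (Metric.ball (0 : Euc N) 1)ᶜ _)
      refine setLIntegral_congr_fun measurableSet_ball.compl (fun z hz => ?_)
      have h1z : (1 : ℝ) ≤ ‖z‖ := by
        simpa [Metric.mem_ball, not_lt] using hz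
      have hmin : min 1 (‖z‖^2) = 1 := min_eq_left (by nlinarith)
      rw [hmin]; simp
    have hsplit := lintegral_add_compl j (measurableSet_ball
      (x := (0 : Euc N)) (ε := 1)) (μ := volume)
    have hfin2 : (∫⁻ z, j z) < ⊤ := by
      rw [← hsplit]
      refine lt_of_le_of_lt (add_le_add hb hcmp) ?_
      exact ENNReal.add_lt_top.mpr
        ⟨ENNReal.mul_lt_top (ENNReal.natCast_lt_top m) measure_ball_lt_top, hA1.2⟩
    exact absurd hA2 hfin2.ne
  -- monotone convergence: sup of truncated integrals is ⊤
  have hpt : ∀ z : Euc N,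
      (⨆ m : ℕ, ({z : Euc N | j z < (m : ℝ≥0∞)}.indicator j) z)
        = ({z : Euc N | j z < ⊤}.indicator j) z := by
    intro z
    by_cases hz : j z < ⊤
    · rw [Set.indicator_of_mem (show z ∈ {z : Euc N | j z < ⊤} from hz) j]
      apply le_antisymm
      · exact iSup_le fun k => Set.indicator_le_self _ _ z
      · obtain ⟨m, hm⟩ := ENNReal.exists_nat_gt hz.ne
        exact le_iSup_of_le m
          (le_of_eq (Set.indicator_of_mem (show z ∈ {z : Euc N | j z < (m : ℝ≥0∞)} from hm) j).symm)
    · rw [Set.indicator_of_notMem (show z ∉ {z : Euc N | j z < ⊤} from hz) j]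
      refine le_antisymm (iSup_le fun k => ?_) zero_le
      rw [Set.indicator_of_notMem _ j]
      intro hk
      have hk' : j z < (k : ℝ≥0∞) := hk
      exact hz (hk'.trans (lt_top_iff_ne_top.mpr (ENNReal.natCast_ne_top k)))
  have hsup : (⨆ m : ℕ, ∫⁻ z in {z : Euc N | j z < (m : ℝ≥0∞)}, j z) = ⊤ := by
    have hmono : Monotone fun m : ℕ => ({z : Euc N | j z < (m : ℝ≥0∞)}.indicator j) := by
      intro a b hab
      refine Set.indicator_le_indicator_of_subset (fun z hz => ?_) (fun z => zero_le)
      have hz' : j z < (a : ℝ≥0∞) := hz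
      exact hz'.trans_le (by exact_mod_cast Nat.cast_le.mpr hab)
    have hmeas : ∀ m : ℕ, Measurable ({z : Euc N | j z < (m : ℝ≥0∞)}.indicator j) :=
      fun m => hj.indicator (hsetm _)
    have hrest : volume.restrict {z : Euc N | j z < ⊤} = volume :=
      Measure.restrict_eq_self_of_ae_mem hfin
    calc (⨆ m : ℕ, ∫⁻ z in {z : Euc N | j z < (m : ℝ≥0∞)}, j z)
        = ⨆ m : ℕ, ∫⁻ z, ({z : Euc N | j z < (m : ℝ≥0∞)}.indicator j) z := by
          refine iSup_congr fun m => ?_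
          rw [lintegral_indicator (hsetm _)]
      _ = ∫⁻ z, ⨆ m : ℕ, ({z : Euc N | j z < (m : ℝ≥0∞)}.indicator j) z :=
          (lintegral_iSup hmeas hmono).symm
      _ = ∫⁻ z, ({z : Euc N | j z < ⊤}.indicator j) z := lintegral_congr hpt
      _ = ∫⁻ z in {z : Euc N | j z < ⊤}, j z := by
          rw [lintegral_indicator (hsetm _)]
      _ = ∫⁻ z, j z := by rw [hrest]
      _ = ⊤ := hA2
  -- conclude
  refine ENNReal.tendsto_nhds_top fun n => ?_
  obtain ⟨m, hm⟩ : ∃ m : ℕ, (n : ℝ≥0∞) < ∫⁻ z in {z : Euc N | j z < (m : ℝ≥0∞)}, j z := by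
    rw [← lt_iSup_iff, hsup]
    exact ENNReal.natCast_lt_top n
  have hV : (0 : ℝ≥0∞) < volume {x : Euc N | (m : ℝ≥0∞) < j x} :=
    pos_iff_ne_zero.mpr (hpos m)
  have hev : ∀ᶠ r in 𝓝[>] (0 : ℝ≥0∞), r < volume {x : Euc N | (m : ℝ≥0∞) < j x} :=
    eventually_nhdsWithin_of_eventually_nhds
      (eventually_of_mem (Iio_mem_nhds hV) fun r hr => hr)
  filter_upwards [hev, self_mem_nhdsWithin] with r hr hr0
  have hd : (m : ℝ≥0∞) ≤ decRearr j r := by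
    refine le_sInf fun c hc => ?_
    by_contra hcm
    push_neg at hcm
    have hsub : volume {x : Euc N | (m : ℝ≥0∞) < j x} ≤ volume {x : Euc N | c < j x} :=
      measure_mono fun x hx => lt_trans hcm hx
    exact absurd (le_trans hsub hc) (not_le.mpr hr)
  calc (n : ℝ≥0∞) < ∫⁻ z in {z : Euc N | j z < (m : ℝ≥0∞)}, j z := hm
    _ ≤ ∫⁻ z in {z : Euc N | j z < decRearr j r}, j z :=
        lintegral_mono_set fun z hz => lt_of_lt_of_le hz hd
    _ ≤ kappaFun j r := le_self_add
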